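/- Any two minimal finite spaces that are homotopy equivalent are homeomorphic; consequently, the core of a finite space is unique up to homeomorphism. -/

import Mathlib

/-- The minimal open set containing `x`: the intersection of all open sets containing `x`. -/
def minOpen {X : Type*} [TopologicalSpace X] (x : X) : Set X :=
  ⋂₀ {U : Set X | IsOpen U ∧ x ∈ U}

/-- The specialization order: `x ≤ y` iff `U_x ⊆ U_y`. -/
def sle {X : Type*} [TopologicalSpace X] (x y : X) : Prop := minOpen x ⊆ minOpen y

/-- Strict specialization order. -/
def slt {X : Type*} [TopologicalSpace X] (x y : X) : Prop := sle x y ∧ x ≠ y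

/-- A point `x` is up-beat if there is `y > x` such that every `z > x` satisfies `z ≥ y`. -/
def UpBeat {X : Type*} [TopologicalSpace X] (x : X) : Prop :=
  ∃ y : X, slt x y ∧ ∀ z : X, slt x z → sle y z

/-- A point `x` is down-beat if there is `y < x` such that every `z < x` satisfies `z ≤ y`. -/
def DownBeat {X : Type*} [TopologicalSpace X] (x : X) : Prop :=
  ∃ y : X, slt y x ∧ ∀ z : X, slt z x → sle z y

/-- A minimal finite space: a finite T0 space with no up-beat and no down-beat points. -/
def IsMinimalFiniteSpace (X : Type*) [TopologicalSpace X] : Prop :=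
  Finite X ∧ T0Space X ∧ ∀ x : X, ¬ UpBeat x ∧ ¬ DownBeat x

section aux

variable {X Y : Type*} [TopologicalSpace X] [TopologicalSpace Y]

lemma mem_minOpen_self (x : X) : x ∈ minOpen x := fun _ hU => hU.2

lemma minOpen_subset {U : Set X} (hU : IsOpen U) {x : X} (hx : x ∈ U) : minOpen x ⊆ U :=
  Set.sInter_subset_of_mem ⟨hU, hx⟩

lemma isOpen_minOpen [Finite X] (x : X) : IsOpen (minOpen x) :=
  (Set.toFinite _).isOpen_sInter (fun _ hU => hU.1)

lemma sle_iff_mem' {x y : X} : sle x y ↔ x ∈ minOpen y := by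
  constructor
  · intro h; exact h (mem_minOpen_self x)
  · intro h v hv U hU
    exact hv U ⟨hU.1, (minOpen_subset hU.1 hU.2 : minOpen y ⊆ U) h⟩

lemma minOpen_injective [T0Space X] : Function.Injective (minOpen (X := X)) := by
  intro x y hxy
  refine Inseparable.eq ?_
  rw [inseparable_iff_forall_isOpen]
  intro U hU
  constructor
  · intro hx
    exact minOpen_subset hU hx (hxy ▸ mem_minOpen_self y)
  · intro hy
    exact minOpen_subset hU hy (hxy ▸ mem_minOpen_self x : x ∈ minOpen y)

lemma sle_antisymm [T0Space X] {x y : X} (h1 : sle x y) (h2 : sle y x) : x = y :=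
  minOpen_injective (le_antisymm h1 h2)

lemma continuous_mono [Finite Y] {f : X → Y} (hf : Continuous f) {a b : X} (h : sle a b) :
    sle (f a) (f b) := by
  rw [sle_iff_mem']
  have hopen : IsOpen (f ⁻¹' minOpen (f b)) := (isOpen_minOpen (f b)).preimage hf
  have hb : b ∈ f ⁻¹' minOpen (f b) := mem_minOpen_self (f b)
  exact minOpen_subset hopen hb (sle_iff_mem'.1 h)

/-- If `f ≤ id` pointwise on a minimal finite space, then `f = id`. -/
lemma eq_id_of_le (hX : IsMinimalFiniteSpace X) {f : X → X} (hf : Continuous f)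
    (hle : ∀ x, sle (f x) x) : ∀ x, f x = x := by
  obtain ⟨hfin, ht0, hbeat⟩ := hX
  by_contra hc
  push_neg at hc
  obtain ⟨x₀, hx₀⟩ := hc
  set s : Set X := {x | f x ≠ x} with hs
  have hne : s.Nonempty := ⟨x₀, hx₀⟩
  obtain ⟨a, ha, hmin'⟩ := Set.Finite.exists_minimalFor minOpen s (Set.toFinite s) hne
  have hmin : ∀ z ∈ s, minOpen z ≤ minOpen a → minOpen a = minOpen z :=
    fun z hz h => le_antisymm (hmin' hz h) h
  refine (hbeat a).2 ⟨f a, ⟨hle a, ha⟩, ?_⟩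
  rintro z ⟨hz1, hz2⟩
  have hz : z ∉ s := by
    intro hzs
    exact hz2 (minOpen_injective (hmin z hzs hz1)).symm
  have : f z = z := not_not.mp hz
  have := continuous_mono hf hz1 (f := f)
  rwa [not_not.mp hz] at this

/-- If `f ≥ id` pointwise on a minimal finite space, then `f = id`. -/
lemma eq_id_of_ge (hX : IsMinimalFiniteSpace X) {f : X → X} (hf : Continuous f)
    (hle : ∀ x, sle x (f x)) : ∀ x, f x = x := by
  obtain ⟨hfin, ht0, hbeat⟩ := hX
  by_contra hc
  push_neg at hc
  obtain ⟨x₀, hx₀⟩ := hc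
  set s : Set X := {x | f x ≠ x} with hs
  have hne : s.Nonempty := ⟨x₀, hx₀⟩
  obtain ⟨a, ha, hmax'⟩ := Set.Finite.exists_maximalFor minOpen s (Set.toFinite s) hne
  have hmax : ∀ z ∈ s, minOpen a ≤ minOpen z → minOpen a = minOpen z :=
    fun z hz h => le_antisymm h (hmax' hz h)
  refine (hbeat a).1 ⟨f a, ⟨hle a, fun h => ha h.symm⟩, ?_⟩
  rintro z ⟨hz1, hz2⟩
  have hz : z ∉ s := by
    intro hzs
    exact hz2 (minOpen_injective (hmax z hzs hz1))
  have := continuous_mono hf hz1 (f := f)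
  rwa [not_not.mp hz] at this

/-- A self-map of a minimal finite space homotopic to the identity is the identity. -/
lemma homotopy_to_id (hX : IsMinimalFiniteSpace X) (f : C(X, X))
    (H : f.Homotopy (ContinuousMap.id X)) : ∀ x, f x = x := by
  have hfin : Finite X := hX.1
  -- slice maps
  set F : unitInterval → X → X := fun t x => H (t, x) with hF
  have hFc : ∀ t, Continuous (F t) := fun t =>
    H.continuous.comp (continuous_const.prodMk continuous_id)
  -- near each t, F s ≤ F t pointwise
  have key : ∀ t : unitInterval, ∃ V ∈ nhds t, ∀ s ∈ V, ∀ x, sle (F s x) (F t x) := by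
    intro t
    have hx : ∀ x : X, {s : unitInterval | F s x ∈ minOpen (F t x)} ∈ nhds t := by
      intro x
      have hc : Continuous fun s : unitInterval => F s x :=
        H.continuous.comp (continuous_id.prodMk continuous_const)
      have := (isOpen_minOpen (F t x)).preimage hc
      exact this.mem_nhds (mem_minOpen_self (F t x))
    refine ⟨⋂ x : X, {s | F s x ∈ minOpen (F t x)}, ?_, ?_⟩
    · exact (Filter.iInter_mem).2 hx
    · intro s hs x
      exact sle_iff_mem'.2 (Set.mem_iInter.1 hs x)
  set S : Set unitInterval := {t | ∀ x, F t x = x} with hS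
  have hopen : IsOpen S := by
    rw [isOpen_iff_mem_nhds]
    intro t ht
    obtain ⟨V, hV, hVle⟩ := key t
    refine Filter.mem_of_superset hV ?_
    intro s hsV x
    refine eq_id_of_le hX (hFc s) (fun y => ?_) x
    have := hVle s hsV y
    rwa [ht y] at this
  have hclosed : IsClosed S := by
    rw [← isOpen_compl_iff, isOpen_iff_mem_nhds]
    intro t ht
    obtain ⟨V, hV, hVle⟩ := key t
    refine Filter.mem_of_superset hV ?_
    intro s hsV hsS
    refine ht (fun x => ?_)
    refine eq_id_of_ge hX (hFc t) (fun y => ?_) x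
    have := hVle s hsV y
    rwa [hsS y] at this
  have hne : (1 : unitInterval) ∈ S := fun x => H.apply_one x
  have : S = Set.univ := (IsClopen.eq_univ ⟨hclosed, hopen⟩ ⟨1, hne⟩)
  have h0 : (0 : unitInterval) ∈ S := this ▸ Set.mem_univ _
  intro x
  have := h0 x
  rwa [show F 0 x = f x from H.apply_zero x] at this

end aux

/-- Two homotopy equivalent minimal finite spaces are homeomorphic; consequently the
core of a finite space is unique up to homeomorphism. -/
theorem minimal_homotopyEquiv_implies_homeomorphic
    {X Y : Type*} [TopologicalSpace X] [TopologicalSpace Y]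
    (hX : IsMinimalFiniteSpace X) (hY : IsMinimalFiniteSpace Y)
    (h : Nonempty (ContinuousMap.HomotopyEquiv X Y)) : Nonempty (X ≃ₜ Y) := by
  obtain ⟨e⟩ := h
  obtain ⟨Hl⟩ := e.left_inv
  obtain ⟨Hr⟩ := e.right_inv
  have hgf : ∀ x, e.invFun (e.toFun x) = x := homotopy_to_id hX _ Hl
  have hfg : ∀ y, e.toFun (e.invFun y) = y := homotopy_to_id hY _ Hr
  exact ⟨⟨⟨e.toFun, e.invFun, hgf, hfg⟩, e.toFun.continuous, e.invFun.continuous⟩⟩
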